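/- Let φ and ψ be injective simplicial maps of the Farey graph to itself. If there exist three pairwise adjacent vertices u, v, w of the Farey graph such that φ(u) = ψ(u), φ(v) = ψ(v), and φ(w) = ψ(w), then φ = ψ. -/

import Mathlib

/-- Coprime pairs of integers, the "homogeneous coordinates" of Farey vertices. -/
def CoprimePair : Type := {p : ℤ × ℤ // IsCoprime p.1 p.2}

/-- Two coprime pairs are identified when they agree up to an overall sign. -/
def fareySetoid : Setoid CoprimePair where
  r a b := a.val = b.val ∨ a.val = -b.val
  iseqv := by
    constructor
    · intro a; exact Or.inl rfl
    · rintro a b (h | h)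
      · exact Or.inl h.symm
      · right; rw [h, neg_neg]
    · rintro a b c (h | h) (h' | h')
      · exact Or.inl (h.trans h')
      · exact Or.inr (h.trans h')
      · right; rw [h, h']
      · left; rw [h, h', neg_neg]

/-- The vertex set of the Farey graph: coprime pairs of integers up to sign. -/
def Farey : Type := Quotient fareySetoid

/-- The class of a coprime pair in the Farey graph. -/
def Farey.mk (p : CoprimePair) : Farey := Quotient.mk fareySetoid p

/-- Adjacency in the Farey graph: `[(p,q)]` and `[(r,s)]` are adjacent iff `|ps - qr| = 1`. -/
def Farey.Adj (x y : Farey) : Prop :=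
  ∃ p q : CoprimePair, x = Farey.mk p ∧ y = Farey.mk q ∧
    |p.val.1 * q.val.2 - p.val.2 * q.val.1| = 1


namespace FareyAux

/-- determinant of two integer pairs -/
def pdet (p q : ℤ × ℤ) : ℤ := p.1 * q.2 - p.2 * q.1

lemma isCoprime_of_det {a b c d : ℤ} (h : |a * d - b * c| = 1) : IsCoprime a b := by
  rcases (abs_eq (by norm_num)).mp h with h | h
  · exact ⟨d, -c, by linarith⟩
  · exact ⟨-d, c, by linarith⟩

lemma coprime_of_pdet {p q : ℤ × ℤ} (h : |pdet p q| = 1) : IsCoprime p.1 p.2 :=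
  isCoprime_of_det (a := p.1) (b := p.2) (c := q.1) (d := q.2) h

lemma mk_eq_mk {p q : CoprimePair} (h : p.val = q.val ∨ p.val = -q.val) :
    Farey.mk p = Farey.mk q := Quotient.sound h

lemma mk_exact {p q : CoprimePair} (h : Farey.mk p = Farey.mk q) :
    p.val = q.val ∨ p.val = -q.val := Quotient.exact h

lemma adj_mk_iff (p q : CoprimePair) :
    Farey.Adj (Farey.mk p) (Farey.mk q) ↔ |pdet p.val q.val| = 1 := by
  constructor
  · rintro ⟨p', q', hp, hq, hd⟩
    rcases mk_exact hp with h1 | h1 <;> rcases mk_exact hq with h2 | h2 <;>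
      rw [h1, h2] <;> simp only [pdet, Prod.fst_neg, Prod.snd_neg] <;>
      [skip;
       rw [show p'.val.1 * -q'.val.2 - p'.val.2 * -q'.val.1
            = -(p'.val.1 * q'.val.2 - p'.val.2 * q'.val.1) from by ring, abs_neg];
       rw [show -p'.val.1 * q'.val.2 - -p'.val.2 * q'.val.1
            = -(p'.val.1 * q'.val.2 - p'.val.2 * q'.val.1) from by ring, abs_neg];
       rw [show -p'.val.1 * -q'.val.2 - -p'.val.2 * -q'.val.1
            = (p'.val.1 * q'.val.2 - p'.val.2 * q'.val.1) from by ring]] <;>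
      exact hd
  · intro h
    exact ⟨p, q, rfl, rfl, h⟩

/-- sum of two coprime pairs with unimodular determinant -/
def padd (p q : CoprimePair) (hD : |pdet p.val q.val| = 1) : CoprimePair :=
  ⟨p.val + q.val, coprime_of_pdet (q := q.val)
    (by rw [show pdet (p.val + q.val) q.val = pdet p.val q.val from by
          simp only [pdet, Prod.fst_add, Prod.snd_add]; ring]; exact hD)⟩

/-- difference of two coprime pairs with unimodular determinant -/
def psub (p q : CoprimePair) (hD : |pdet p.val q.val| = 1) : CoprimePair :=
  ⟨p.val - q.val, coprime_of_pdet (q := q.val)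
    (by rw [show pdet (p.val - q.val) q.val = pdet p.val q.val from by
          simp only [pdet, Prod.fst_sub, Prod.snd_sub]; ring]; exact hD)⟩

/-- negation of a coprime pair -/
def pneg (p : CoprimePair) : CoprimePair :=
  ⟨-p.val, by
    have := p.property
    exact (this.neg_left).neg_right⟩

lemma mk_pneg (p : CoprimePair) : Farey.mk (pneg p) = Farey.mk p :=
  mk_eq_mk (Or.inr rfl)

/-- any common neighbor of an edge is the sum or the difference -/
lemma common_neighbor (p q r : CoprimePair) (hD : |pdet p.val q.val| = 1)
    (h1 : |pdet p.val r.val| = 1) (h2 : |pdet q.val r.val| = 1) :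
    Farey.mk r = Farey.mk (padd p q hD) ∨ Farey.mk r = Farey.mk (psub p q hD) := by
  set D := pdet p.val q.val with hDdef
  have ha : |pdet r.val q.val| = 1 := by
    rw [show pdet r.val q.val = -(pdet q.val r.val) from by simp only [pdet]; ring, abs_neg]
    exact h2
  set a := pdet r.val q.val with hadef
  set b := pdet p.val r.val with hbdef
  have e1 : a * p.val.1 + b * q.val.1 = D * r.val.1 := by
    simp only [hadef, hbdef, hDdef, pdet]; ring
  have e2 : a * p.val.2 + b * q.val.2 = D * r.val.2 := by
    simp only [hadef, hbdef, hDdef, pdet]; ring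
  rcases (abs_eq (by norm_num)).mp ha with ha' | ha' <;>
  rcases (abs_eq (by norm_num)).mp h1 with hb' | hb' <;>
  rcases (abs_eq (by norm_num)).mp hD with hD' | hD' <;>
  rw [ha', hb', hD'] at e1 e2 <;>
  first
  | (left; refine mk_eq_mk (Or.inl ?_); show r.val = p.val + q.val
     refine Prod.ext_iff.mpr ⟨?_, ?_⟩ <;> simp only [Prod.fst_add, Prod.snd_add] <;> linarith)
  | (left; refine mk_eq_mk (Or.inr ?_); show r.val = -(p.val + q.val)
     refine Prod.ext_iff.mpr ⟨?_, ?_⟩ <;>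
       simp only [Prod.fst_neg, Prod.snd_neg, Prod.fst_add, Prod.snd_add] <;> linarith)
  | (right; refine mk_eq_mk (Or.inl ?_); show r.val = p.val - q.val
     refine Prod.ext_iff.mpr ⟨?_, ?_⟩ <;> simp only [Prod.fst_sub, Prod.snd_sub] <;> linarith)
  | (right; refine mk_eq_mk (Or.inr ?_); show r.val = -(p.val - q.val)
     refine Prod.ext_iff.mpr ⟨?_, ?_⟩ <;>
       simp only [Prod.fst_neg, Prod.snd_neg, Prod.fst_sub, Prod.snd_sub] <;> linarith)

/-- a vertex distinct from one common neighbor of an edge equals the other one -/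
lemma flip {x y z z' w : Farey} (hxy : Farey.Adj x y)
    (hxz : Farey.Adj x z) (hyz : Farey.Adj y z)
    (hxz' : Farey.Adj x z') (hyz' : Farey.Adj y z')
    (hxw : Farey.Adj x w) (hyw : Farey.Adj y w)
    (hzz' : z ≠ z') (hwz : w ≠ z) : w = z' := by
  obtain ⟨p, q, rfl, rfl, hD⟩ := hxy
  obtain ⟨r, rfl⟩ := Quotient.exists_rep z
  obtain ⟨r', rfl⟩ := Quotient.exists_rep z'
  obtain ⟨s, rfl⟩ := Quotient.exists_rep w
  have hz := common_neighbor p q r hD ((adj_mk_iff p r).mp hxz) ((adj_mk_iff q r).mp hyz)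
  have hz' := common_neighbor p q r' hD ((adj_mk_iff p r').mp hxz') ((adj_mk_iff q r').mp hyz')
  have hw := common_neighbor p q s hD ((adj_mk_iff p s).mp hxw) ((adj_mk_iff q s).mp hyw)
  rcases hz with hz | hz <;> rcases hz' with hz' | hz' <;> rcases hw with hw | hw <;>
    first
    | (exact absurd (hz.trans hz'.symm) hzz')
    | (exact absurd (hw.trans hz.symm) hwz)
    | (exact hw.trans hz'.symm)

lemma comb_coprime {p q : CoprimePair} (hD : |pdet p.val q.val| = 1)
    {a b : ℤ} (h : IsCoprime a b) :
    IsCoprime (a * p.val.1 + b * q.val.1) (a * p.val.2 + b * q.val.2) := by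
  obtain ⟨s, t, hst⟩ := h
  have hD2 : pdet p.val q.val * pdet p.val q.val = 1 := by
    rw [← abs_mul_abs_self (pdet p.val q.val), hD]; norm_num
  refine ⟨pdet p.val q.val * (s * q.val.2 - t * p.val.2),
          pdet p.val q.val * (t * p.val.1 - s * q.val.1), ?_⟩
  simp only [pdet] at hD2 ⊢
  linear_combination (s * a + t * b) * hD2 + hst

/-- the vertex with coordinates (a, b) in the basis (p, q) -/
def Vmap (p q : CoprimePair) (hD : |pdet p.val q.val| = 1) (a b : ℤ) (h : IsCoprime a b) :
    Farey :=
  Farey.mk ⟨(a * p.val.1 + b * q.val.1, a * p.val.2 + b * q.val.2), comb_coprime hD h⟩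

lemma Vmap_congr {p q : CoprimePair} (hD : |pdet p.val q.val| = 1) {a b a' b' : ℤ}
    {h : IsCoprime a b} {h' : IsCoprime a' b'} (ha : a = a') (hb : b = b') :
    Vmap p q hD a b h = Vmap p q hD a' b' h' := by subst ha; subst hb; rfl

lemma Vmap_neg {p q : CoprimePair} (hD : |pdet p.val q.val| = 1) {a b : ℤ}
    (h : IsCoprime a b) (h' : IsCoprime (-a) (-b)) :
    Vmap p q hD (-a) (-b) h' = Vmap p q hD a b h := by
  exact mk_eq_mk (Or.inr (Prod.ext_iff.mpr ⟨by simp; ring, by simp; ring⟩))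

lemma Vmap_adj {p q : CoprimePair} (hD : |pdet p.val q.val| = 1) {a b c d : ℤ}
    (h : IsCoprime a b) (h' : IsCoprime c d) (hdet : |a * d - b * c| = 1) :
    Farey.Adj (Vmap p q hD a b h) (Vmap p q hD c d h') := by
  refine (adj_mk_iff _ _).mpr ?_
  show |pdet (_, _) (_, _)| = 1
  rw [show pdet (a * p.val.1 + b * q.val.1, a * p.val.2 + b * q.val.2)
        (c * p.val.1 + d * q.val.1, c * p.val.2 + d * q.val.2)
      = (a * d - b * c) * pdet p.val q.val from by simp only [pdet]; ring]
  rw [abs_mul, hdet, hD]; norm_num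

lemma Vmap_inj {p q : CoprimePair} (hD : |pdet p.val q.val| = 1) {a b c d : ℤ}
    (h : IsCoprime a b) (h' : IsCoprime c d)
    (heq : Vmap p q hD a b h = Vmap p q hD c d h') :
    (a = c ∧ b = d) ∨ (a = -c ∧ b = -d) := by
  have hD0 : pdet p.val q.val ≠ 0 := by
    intro h0; rw [h0] at hD; simp at hD
  rcases mk_exact heq with he | he
  · obtain ⟨e1, e2⟩ := Prod.ext_iff.mp he
    simp only at e1 e2
    left
    constructor <;> apply mul_right_cancel₀ hD0 <;> simp only [pdet]
    · linear_combination q.val.2 * e1 - q.val.1 * e2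
    · linear_combination p.val.1 * e2 - p.val.2 * e1
  · obtain ⟨e1, e2⟩ := Prod.ext_iff.mp he
    simp only [Prod.fst_neg, Prod.snd_neg] at e1 e2
    right
    constructor <;> apply mul_right_cancel₀ hD0 <;> simp only [pdet]
    · linear_combination q.val.2 * e1 - q.val.1 * e2
    · linear_combination p.val.1 * e2 - p.val.2 * e1


lemma decomp (a b : ℤ) (h : IsCoprime a b) (ha : 1 ≤ a) (hb : 1 ≤ b)
    (hne : ¬(a = 1 ∧ b = 1)) :
    ∃ c d e f : ℤ, a = c + e ∧ b = d + f ∧ |c * f - d * e| = 1 ∧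
      c.natAbs + d.natAbs < a.natAbs + b.natAbs ∧
      e.natAbs + f.natAbs < a.natAbs + b.natAbs ∧
      (c - e).natAbs + (d - f).natAbs < a.natAbs + b.natAbs := by
  rcases eq_or_lt_of_le ha with ha1 | ha2
  · have hb2 : 2 ≤ b := by
      rcases eq_or_lt_of_le hb with h1 | h1
      · exact absurd ⟨ha1.symm, h1.symm⟩ hne
      · omega
    refine ⟨0, 1, 1, b - 1, by omega, by omega, ?_, ?_, ?_, ?_⟩
    · rw [show (0:ℤ) * (b-1) - 1 * 1 = -1 from by ring]; norm_num
    · omega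
    · omega
    · omega
  rcases eq_or_lt_of_le hb with hb1 | hb2
  · refine ⟨1, 0, a - 1, 1, by omega, by omega, ?_, ?_, ?_, ?_⟩
    · rw [show (1:ℤ) * 1 - 0 * (a-1) = 1 from by ring]; norm_num
    · omega
    · omega
    · omega
  · obtain ⟨s, t, hst⟩ := h
    have ha0 : a ≠ 0 := by omega
    set c := t % a with hc
    have hc0 : 0 ≤ c := Int.emod_nonneg t ha0
    have hca : c < a := Int.emod_lt_of_pos t (by omega)
    set d := -s - t / a * b with hd
    have hdc : d * a = c * b - 1 := by
      have hmod : c = t - a * (t / a) := Int.emod_def t a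
      rw [hd, hmod]; linear_combination -hst
    have hc1 : 1 ≤ c := by
      rcases eq_or_lt_of_le hc0 with h0 | h0
      · exfalso
        have hda : d * a = -1 := by rw [hdc, ← h0]; ring
        have : IsUnit a := IsUnit.of_mul_eq_one (a := a) (-d) (by linear_combination -hda)
        rcases Int.isUnit_iff.mp this with h | h <;> omega
      · omega
    have hd1 : 1 ≤ d := by nlinarith
    have hdb : d < b := by nlinarith
    refine ⟨c, d, a - c, b - d, by ring, by ring, ?_, ?_, ?_, ?_⟩
    · rw [show c * (b - d) - d * (a - c) = -(d * a - c * b) from by ring, hdc]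
      norm_num
    · omega
    · omega
    · omega

end FareyAux

/-- Two injective simplicial maps of the Farey graph which agree on the three
vertices of a triangle are equal. -/
theorem farey_injective_simplicial_maps_eq_of_agree_on_triangle
    (φ ψ : Farey → Farey)
    (hφinj : Function.Injective φ) (hψinj : Function.Injective ψ)
    (hφadj : ∀ x y : Farey, Farey.Adj x y → Farey.Adj (φ x) (φ y))
    (hψadj : ∀ x y : Farey, Farey.Adj x y → Farey.Adj (ψ x) (ψ y))
    (u v w : Farey) (huv : Farey.Adj u v) (hvw : Farey.Adj v w) (huw : Farey.Adj u w)
    (hu : φ u = ψ u) (hv : φ v = ψ v) (hw : φ w = ψ w) :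
    φ = ψ := by
  classical
  obtain ⟨p, q0, hup, hvq0, hD0⟩ := huv
  have hD0' : |FareyAux.pdet p.val q0.val| = 1 := hD0
  obtain ⟨t, hwt⟩ := Quotient.exists_rep w
  have hpw : |FareyAux.pdet p.val t.val| = 1 := by
    rw [hup, ← hwt] at huw
    exact (FareyAux.adj_mk_iff p t).mp huw
  have hqw : |FareyAux.pdet q0.val t.val| = 1 := by
    rw [hvq0, ← hwt] at hvw
    exact (FareyAux.adj_mk_iff q0 t).mp hvw
  obtain ⟨q, hDq, hvq, hwq⟩ :
      ∃ q : CoprimePair, ∃ hDq : |FareyAux.pdet p.val q.val| = 1,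
        v = Farey.mk q ∧ w = Farey.mk (FareyAux.padd p q hDq) := by
    rcases FareyAux.common_neighbor p q0 t hD0' hpw hqw with hc | hc
    · exact ⟨q0, hD0', hvq0, by rw [← hwt]; exact hc⟩
    · have hDq : |FareyAux.pdet p.val (FareyAux.pneg q0).val| = 1 := by
        show |FareyAux.pdet p.val (-q0.val)| = 1
        rw [show FareyAux.pdet p.val (-q0.val) = -(FareyAux.pdet p.val q0.val) from by
          simp only [FareyAux.pdet, Prod.fst_neg, Prod.snd_neg]; ring, abs_neg]
        exact hD0'
      refine ⟨FareyAux.pneg q0, hDq, ?_, ?_⟩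
      · rw [hvq0, FareyAux.mk_pneg]
      · rw [← hwt]
        refine hc.trans ?_
        refine FareyAux.mk_eq_mk (Or.inl ?_)
        show p.val - q0.val = p.val + -q0.val
        exact sub_eq_add_neg _ _
  clear hD0 hD0' hpw hqw hwt hvq0 huw hvw
  -- base values
  have hVu : ∀ h : IsCoprime (1:ℤ) 0, FareyAux.Vmap p q hDq 1 0 h = u := by
    intro h
    rw [hup]
    refine FareyAux.mk_eq_mk (Or.inl ?_)
    show ((1:ℤ) * p.val.1 + 0 * q.val.1, (1:ℤ) * p.val.2 + 0 * q.val.2) = p.val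
    refine Prod.ext_iff.mpr ⟨?_, ?_⟩ <;> simp
  have hVv : ∀ h : IsCoprime (0:ℤ) 1, FareyAux.Vmap p q hDq 0 1 h = v := by
    intro h
    rw [hvq]
    refine FareyAux.mk_eq_mk (Or.inl ?_)
    show ((0:ℤ) * p.val.1 + 1 * q.val.1, (0:ℤ) * p.val.2 + 1 * q.val.2) = q.val
    refine Prod.ext_iff.mpr ⟨?_, ?_⟩ <;> simp
  have hVw : ∀ h : IsCoprime (1:ℤ) 1, FareyAux.Vmap p q hDq 1 1 h = w := by
    intro h
    rw [hwq]
    refine FareyAux.mk_eq_mk (Or.inl ?_)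
    show ((1:ℤ) * p.val.1 + 1 * q.val.1, (1:ℤ) * p.val.2 + 1 * q.val.2) = p.val + q.val
    refine Prod.ext_iff.mpr ⟨?_, ?_⟩ <;> simp [Prod.fst_add, Prod.snd_add]
  -- the flip step
  have hstep : ∀ (a b c d e f : ℤ) (h : IsCoprime a b) (hc : IsCoprime c d)
      (he : IsCoprime e f) (hcf : IsCoprime (c - e) (d - f)),
      a = c + e → b = d + f → |c * f - d * e| = 1 →
      φ (FareyAux.Vmap p q hDq c d hc) = ψ (FareyAux.Vmap p q hDq c d hc) →
      φ (FareyAux.Vmap p q hDq e f he) = ψ (FareyAux.Vmap p q hDq e f he) →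
      φ (FareyAux.Vmap p q hDq (c - e) (d - f) hcf)
        = ψ (FareyAux.Vmap p q hDq (c - e) (d - f) hcf) →
      φ (FareyAux.Vmap p q hDq a b h) = ψ (FareyAux.Vmap p q hDq a b h) := by
    intro a b c d e f h hc he hcf hac hbd hdet h1 h2 h3
    subst hac; subst hbd
    have adj_xy : Farey.Adj (FareyAux.Vmap p q hDq c d hc) (FareyAux.Vmap p q hDq e f he) :=
      FareyAux.Vmap_adj hDq hc he hdet
    have adj_xz : Farey.Adj (FareyAux.Vmap p q hDq c d hc)
        (FareyAux.Vmap p q hDq (c - e) (d - f) hcf) :=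
      FareyAux.Vmap_adj hDq hc hcf
        (by rw [show c * (d - f) - d * (c - e) = -(c * f - d * e) from by ring, abs_neg]
            exact hdet)
    have adj_yz : Farey.Adj (FareyAux.Vmap p q hDq e f he)
        (FareyAux.Vmap p q hDq (c - e) (d - f) hcf) :=
      FareyAux.Vmap_adj hDq he hcf
        (by rw [show e * (d - f) - f * (c - e) = -(c * f - d * e) from by ring, abs_neg]
            exact hdet)
    have adj_xa : Farey.Adj (FareyAux.Vmap p q hDq c d hc)
        (FareyAux.Vmap p q hDq (c + e) (d + f) h) :=
      FareyAux.Vmap_adj hDq hc h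
        (by rw [show c * (d + f) - d * (c + e) = (c * f - d * e) from by ring]; exact hdet)
    have adj_ya : Farey.Adj (FareyAux.Vmap p q hDq e f he)
        (FareyAux.Vmap p q hDq (c + e) (d + f) h) :=
      FareyAux.Vmap_adj hDq he h
        (by rw [show e * (d + f) - f * (c + e) = -(c * f - d * e) from by ring, abs_neg]
            exact hdet)
    have hne1 : FareyAux.Vmap p q hDq (c - e) (d - f) hcf
        ≠ FareyAux.Vmap p q hDq (c + e) (d + f) h := by
      intro hEq
      rcases FareyAux.Vmap_inj hDq hcf h hEq with ⟨h1', h2'⟩ | ⟨h1', h2'⟩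
      · have he0 : e = 0 := by omega
        have hf0 : f = 0 := by omega
        rw [he0, hf0] at he
        exact not_isCoprime_zero_zero he
      · have hc0 : c = 0 := by omega
        have hd0 : d = 0 := by omega
        rw [hc0, hd0] at hc
        exact not_isCoprime_zero_zero hc
    symm
    refine FareyAux.flip (hφadj _ _ adj_xy) (hφadj _ _ adj_xz) (hφadj _ _ adj_yz)
      (hφadj _ _ adj_xa) (hφadj _ _ adj_ya) ?_ ?_ ?_ ?_
    · rw [h1]; exact hψadj _ _ adj_xa
    · rw [h2]; exact hψadj _ _ adj_ya
    · exact fun hE => hne1 (hφinj hE)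
    · rw [h3]
      exact fun hE => hne1 ((hψinj hE).symm ▸ rfl)
  -- the main induction on the size of the coordinates
  have key : ∀ n : ℕ, ∀ a b : ℤ, ∀ h : IsCoprime a b, 0 ≤ a → a.natAbs + b.natAbs = n →
      φ (FareyAux.Vmap p q hDq a b h) = ψ (FareyAux.Vmap p q hDq a b h) := by
    intro n
    induction n using Nat.strong_induction_on with
    | _ n IH =>
    have IH' : ∀ a b : ℤ, ∀ h : IsCoprime a b, a.natAbs + b.natAbs < n →
        φ (FareyAux.Vmap p q hDq a b h) = ψ (FareyAux.Vmap p q hDq a b h) := by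
      intro a b hab hlt
      rcases le_or_gt 0 a with ha | ha
      · exact IH _ hlt a b hab ha rfl
      · have h2 : IsCoprime (-a) (-b) := (hab.neg_left).neg_right
        have := IH _ hlt (-a) (-b) h2 (by omega) (by omega)
        rwa [FareyAux.Vmap_neg hDq hab h2] at this
    intro a b hab ha hn
    rcases eq_or_ne b 0 with hb0 | hb0
    · -- b = 0, a = 1
      subst hb0
      have ha1 : a = 1 := by
        rcases Int.isUnit_iff.mp (isCoprime_zero_right.mp hab) with h | h <;> omega
      subst ha1
      rw [hVu hab]; exact hu
    rcases eq_or_ne a 0 with ha0 | ha0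
    · -- a = 0, b = ±1
      subst ha0
      have hb1 : b = 1 ∨ b = -1 := by
        rcases Int.isUnit_iff.mp (isCoprime_zero_left.mp hab) with h | h <;> omega
      rcases hb1 with rfl | rfl
      · rw [hVv hab]; exact hv
      · have h01 : IsCoprime (0:ℤ) 1 := isCoprime_zero_left.mpr isUnit_one
        have h2 : IsCoprime (-(0:ℤ)) (-(1:ℤ)) := (h01.neg_left).neg_right
        have e1 : FareyAux.Vmap p q hDq 0 (-1) hab
            = FareyAux.Vmap p q hDq (-0) (-1) h2 :=
          FareyAux.Vmap_congr hDq (by norm_num) rfl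
        rw [e1, FareyAux.Vmap_neg hDq h01 h2]
        rw [hVv _]; exact hv
    -- now 1 ≤ a, b ≠ 0
    have ha1 : 1 ≤ a := by omega
    by_cases h11 : a = 1 ∧ b = 1
    · obtain ⟨rfl, rfl⟩ := h11
      rw [hVw hab]; exact hw
    by_cases h1m : a = 1 ∧ b = -1
    · obtain ⟨rfl, rfl⟩ := h1m
      have hc : IsCoprime (1:ℤ) 0 := isCoprime_one_left
      have he : IsCoprime (0:ℤ) (-1) := (isCoprime_zero_left.mpr isUnit_one).neg_right
      have hcf : IsCoprime ((1:ℤ) - 0) (0 - (-1)) := by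
        rw [show (1:ℤ) - 0 = 1 from by norm_num, show (0:ℤ) - (-1) = 1 from by norm_num]
        exact isCoprime_one_left
      refine hstep 1 (-1) 1 0 0 (-1) hab hc he hcf (by norm_num) (by norm_num)
        (by norm_num) ?_ ?_ ?_
      · rw [hVu hc]; exact hu
      · have h01 : IsCoprime (0:ℤ) 1 := isCoprime_zero_left.mpr isUnit_one
        have h2 : IsCoprime (-(0:ℤ)) (-(1:ℤ)) := (h01.neg_left).neg_right
        have e1 : FareyAux.Vmap p q hDq 0 (-1) he
            = FareyAux.Vmap p q hDq (-0) (-1) h2 :=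
          FareyAux.Vmap_congr hDq (by norm_num) rfl
        rw [e1, FareyAux.Vmap_neg hDq h01 h2]
        rw [hVv _]; exact hv
      · have e1 : FareyAux.Vmap p q hDq ((1:ℤ) - 0) (0 - (-1)) hcf
            = FareyAux.Vmap p q hDq 1 1 (isCoprime_one_left) :=
          FareyAux.Vmap_congr hDq (by norm_num) (by norm_num)
        rw [e1, hVw _]; exact hw
    -- the generic case
    rcases lt_or_gt_of_ne hb0 with hbneg | hbpos
    · -- b < 0 : mirror the decomposition of (a, -b)
      obtain ⟨c, d, e, f, hac, hbd, hdet, s1, s2, s3⟩ :=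
        FareyAux.decomp a (-b) hab.neg_right ha1 (by omega)
          (by rintro ⟨x1, x2⟩; exact h1m ⟨x1, by omega⟩)
      have hdet' : |c * (-f) - (-d) * e| = 1 := by
        rw [show c * (-f) - (-d) * e = -(c * f - d * e) from by ring, abs_neg]; exact hdet
      have hc : IsCoprime c (-d) := FareyAux.isCoprime_of_det hdet'
      have he : IsCoprime e (-f) := FareyAux.isCoprime_of_det
        (a := e) (b := -f) (c := c) (d := -d)
        (by rw [show e * -d - -f * c = c * f - d * e from by ring]; exact hdet)
      have hcf : IsCoprime (c - e) (-d - -f) := FareyAux.isCoprime_of_det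
        (a := c - e) (b := -d - -f) (c := e) (d := -f)
        (by rw [show (c - e) * -f - (-d - -f) * e = -(c * f - d * e) from by ring, abs_neg]
            exact hdet)
      refine hstep a b c (-d) e (-f) hab hc he hcf (by omega) (by omega) hdet'
        (IH' c (-d) hc (by omega)) (IH' e (-f) he (by omega))
        (IH' (c - e) (-d - -f) hcf (by omega))
    · -- b > 0
      obtain ⟨c, d, e, f, hac, hbd, hdet, s1, s2, s3⟩ :=
        FareyAux.decomp a b hab ha1 (by omega) h11
      have hc : IsCoprime c d := FareyAux.isCoprime_of_det hdet
      have he : IsCoprime e f := FareyAux.isCoprime_of_det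
        (a := e) (b := f) (c := c) (d := d)
        (by rw [show e * d - f * c = -(c * f - d * e) from by ring, abs_neg]; exact hdet)
      have hcf : IsCoprime (c - e) (d - f) := FareyAux.isCoprime_of_det
        (a := c - e) (b := d - f) (c := e) (d := f)
        (by rw [show (c - e) * f - (d - f) * e = c * f - d * e from by ring]; exact hdet)
      exact hstep a b c d e f hab hc he hcf hac hbd hdet
        (IH' c d hc (by omega)) (IH' e f he (by omega))
        (IH' (c - e) (d - f) hcf (by omega))
  have keyAll : ∀ a b : ℤ, ∀ h : IsCoprime a b,
      φ (FareyAux.Vmap p q hDq a b h) = ψ (FareyAux.Vmap p q hDq a b h) := by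
    intro a b hab
    rcases le_or_gt 0 a with ha | ha
    · exact key _ a b hab ha rfl
    · have h2 : IsCoprime (-a) (-b) := (hab.neg_left).neg_right
      have := key _ (-a) (-b) h2 (by omega) rfl
      rwa [FareyAux.Vmap_neg hDq hab h2] at this
  -- conclude: every vertex has coordinates in the basis (p, q)
  funext x
  obtain ⟨r, rfl⟩ := Quotient.exists_rep x
  have hD2 : FareyAux.pdet p.val q.val * FareyAux.pdet p.val q.val = 1 := by
    rw [← abs_mul_abs_self, hDq]; norm_num
  obtain ⟨s, t', hst⟩ := r.property
  have hab : IsCoprime (FareyAux.pdet p.val q.val * FareyAux.pdet r.val q.val)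
      (FareyAux.pdet p.val q.val * FareyAux.pdet p.val r.val) := by
    refine ⟨s * p.val.1 + t' * p.val.2, s * q.val.1 + t' * q.val.2, ?_⟩
    simp only [FareyAux.pdet] at hD2 ⊢
    linear_combination (s * r.val.1 + t' * r.val.2) * hD2 + hst
  have hmk : Farey.mk r = FareyAux.Vmap p q hDq
      (FareyAux.pdet p.val q.val * FareyAux.pdet r.val q.val)
      (FareyAux.pdet p.val q.val * FareyAux.pdet p.val r.val) hab := by
    refine FareyAux.mk_eq_mk (Or.inl ?_)
    show r.val = (FareyAux.pdet p.val q.val * FareyAux.pdet r.val q.val * p.val.1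
        + FareyAux.pdet p.val q.val * FareyAux.pdet p.val r.val * q.val.1,
      FareyAux.pdet p.val q.val * FareyAux.pdet r.val q.val * p.val.2
        + FareyAux.pdet p.val q.val * FareyAux.pdet p.val r.val * q.val.2)
    refine Prod.ext_iff.mpr ⟨?_, ?_⟩ <;> simp only [FareyAux.pdet] at hD2 ⊢
    · linear_combination (-r.val.1) * hD2
    · linear_combination (-r.val.2) * hD2
  show φ (Farey.mk r) = ψ (Farey.mk r)
  rw [hmk]
  exact keyAll _ _ _
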